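/- Let b, M be positive integers and Ω > 0. Let α_1, …, α_M be i.i.d. nonnegative random variables with density f(x) = (2x/Ω)·exp(−x²/Ω) for x ≥ 0, let Φ_1, …, Φ_M be i.i.d. real random variables uniform on [−π/2^b, π/2^b), and suppose all 2M random variables are mutually independent. Then E[|Σ_{m=1}^{M} α_m·e^{iΦ_m}|²] = M·Ω·(1 + (M−1)·(π/4)·Q), where Q = ((2^b/π)·sin(π/2^b))². -/

import Mathlib

open MeasureTheory ProbabilityTheory Real

section Helpers
open Filter Asymptotics Set NNReal ENNReal
lemma tend_pow_exp {b : ℝ} (hb : 0 < b) (n : ℕ) :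
    Tendsto (fun x : ℝ => x ^ n * Real.exp (-b * x ^ 2)) atTop (nhds 0) := by
  have h1 := rpow_mul_exp_neg_mul_sq_isLittleO_exp_neg hb (n : ℝ)
  have h2 : Tendsto (fun x : ℝ => Real.exp (-(1 / 2 : ℝ) * x)) atTop (nhds 0) := by
    apply Real.tendsto_exp_atBot.comp
    apply Tendsto.const_mul_atTop_of_neg (by norm_num : -(1/2:ℝ) < 0) tendsto_id
  have h3 := h1.isBigO.trans_tendsto h2
  exact h3.congr (fun x => by rw [Real.rpow_natCast])
lemma int_pow_exp {b : ℝ} (hb : 0 < b) (n : ℕ) :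
    Integrable (fun x : ℝ => x ^ n * Real.exp (-b * x ^ 2)) := by
  have := integrable_rpow_mul_exp_neg_mul_sq hb (s := (n:ℝ))
    (lt_of_lt_of_le neg_one_lt_zero (Nat.cast_nonneg n))
  apply this.congr
  filter_upwards [] with x; rw [Real.rpow_natCast]
lemma gauss2 {b : ℝ} (hb : 0 < b) :
    ∫ x in Ioi (0:ℝ), x ^ 2 * Real.exp (-b * x ^ 2) = √(π / b) / (4 * b) := by
  have hF : ∀ x ∈ Ici (0:ℝ), HasDerivAt (fun x : ℝ => -(x / (2*b)) * Real.exp (-b * x ^ 2))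
      (x ^ 2 * Real.exp (-b * x ^ 2) - (1/(2*b)) * Real.exp (-b * x ^ 2)) x := by
    intro x _
    have h1 : HasDerivAt (fun x : ℝ => -(x / (2*b))) (-(1/(2*b))) x := by
      simpa using ((hasDerivAt_id x).div_const (2*b)).fun_neg
    have h2 : HasDerivAt (fun x : ℝ => Real.exp (-b * x ^ 2)) (Real.exp (-b * x^2) * (-b * (2*x))) x := by
      have : HasDerivAt (fun x : ℝ => -b * x ^ 2) (-b * (2*x)) x := by
        simpa using (hasDerivAt_pow 2 x).const_mul (-b)
      exact this.exp
    have := h1.fun_mul h2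
    refine this.congr_deriv ?_
    field_simp
    ring
  have hint : IntegrableOn (fun x : ℝ => x ^ 2 * Real.exp (-b * x ^ 2) - (1/(2*b)) * Real.exp (-b * x ^ 2)) (Ioi 0) := by
    exact ((int_pow_exp hb 2).sub ((integrable_exp_neg_mul_sq hb).const_mul _)).integrableOn
  have htend : Tendsto (fun x : ℝ => -(x / (2*b)) * Real.exp (-b * x ^ 2)) atTop (nhds 0) := by
    have h := ((tend_pow_exp hb 1).div_const (2*b)).neg
    simp only [pow_one, zero_div, neg_zero] at h
    exact Tendsto.congr (fun x => by ring) h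
  have key := integral_Ioi_of_hasDerivAt_of_tendsto' hF hint htend
  simp only [zero_div, neg_zero, zero_mul] at key
  have split : ∫ x in Ioi (0:ℝ), x ^ 2 * Real.exp (-b * x ^ 2) =
      (∫ x in Ioi (0:ℝ), (x ^ 2 * Real.exp (-b * x ^ 2) - (1/(2*b)) * Real.exp (-b * x ^ 2)))
      + (1/(2*b)) * ∫ x in Ioi (0:ℝ), Real.exp (-b * x ^ 2) := by
    rw [← integral_const_mul, ← integral_add hint (((integrable_exp_neg_mul_sq hb).const_mul _).integrableOn)]
    congr 1; funext x; ring
  rw [split, key, integral_gaussian_Ioi]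
  rw [zero_sub, neg_zero, zero_add]
  ring
lemma gauss3 {b : ℝ} (hb : 0 < b) :
    ∫ x in Ioi (0:ℝ), x ^ 3 * Real.exp (-b * x ^ 2) = 1/(2*b^2) := by
  have hF : ∀ x ∈ Ici (0:ℝ), HasDerivAt (fun x : ℝ => -(x^2/(2*b) + 1/(2*b^2)) * Real.exp (-b * x ^ 2))
      (x ^ 3 * Real.exp (-b * x ^ 2)) x := by
    intro x _
    have h1 := (((hasDerivAt_pow 2 x).div_const (2*b)).add_const (1/(2*b^2))).fun_neg
    have h2 : HasDerivAt (fun x : ℝ => Real.exp (-b * x ^ 2)) (Real.exp (-b * x^2) * (-b * (2*x))) x := by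
      have : HasDerivAt (fun x : ℝ => -b * x ^ 2) (-b * (2*x)) x := by
        simpa using (hasDerivAt_pow 2 x).const_mul (-b)
      exact this.exp
    refine (h1.fun_mul h2).congr_deriv ?_
    field_simp
    ring
  have hint : IntegrableOn (fun x : ℝ => x ^ 3 * Real.exp (-b * x ^ 2)) (Ioi 0) :=
    (int_pow_exp hb 3).integrableOn
  have htend : Tendsto (fun x : ℝ => -(x^2/(2*b) + 1/(2*b^2)) * Real.exp (-b * x ^ 2)) atTop (nhds 0) := by
    have h2 := (tend_pow_exp hb 2).div_const (2*b)
    have h0 := (tend_pow_exp hb 0).div_const (2*b^2)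
    have hsum := (h2.add h0).neg
    simp only [pow_zero, one_mul, zero_div, add_zero, neg_zero] at hsum
    exact hsum.congr (fun x => by ring)
  have key := integral_Ioi_of_hasDerivAt_of_tendsto' hF hint htend
  rw [key]
  norm_num
section
variable {Ωs : Type*} [MeasurableSpace Ωs] {μ : Measure Ωs}

lemma moment_pdf (X : Ωs → ℝ) (hX : Measurable X) (dens : ℝ → ℝ) (hdm : Measurable dens)
    (hdnn : ∀ x, 0 ≤ dens x)
    (hpdf : Measure.map X μ = volume.withDensity (fun x => ENNReal.ofReal (dens x)))
    (g : ℝ → ℝ) (hg : Measurable g) (hint : Integrable (fun x => dens x * g x)) :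
    Integrable (fun ω => g (X ω)) μ ∧ ∫ ω, g (X ω) ∂μ = ∫ x, dens x * g x := by
  set f : ℝ → ℝ≥0 := fun x => (dens x).toNNReal with hf
  have fmeas : Measurable f := hdm.real_toNNReal
  have hwd : (volume.withDensity (fun x => ENNReal.ofReal (dens x)))
      = volume.withDensity (fun x => (f x : ℝ≥0∞)) := rfl
  have hsmul : ∀ x, f x • g x = dens x * g x := by
    intro x
    rw [NNReal.smul_def, smul_eq_mul, Real.coe_toNNReal _ (hdnn x)]
  constructor
  · rw [← Function.comp_def,
      ← integrable_map_measure hg.aestronglyMeasurable hX.aemeasurable, hpdf, hwd,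
      integrable_withDensity_iff_integrable_smul fmeas]
    exact hint.congr (Filter.Eventually.of_forall fun x => (hsmul x).symm)
  · rw [← integral_map hX.aemeasurable hg.aestronglyMeasurable, hpdf, hwd,
      integral_withDensity_eq_integral_smul fmeas]
    exact integral_congr_ae (Filter.Eventually.of_forall hsmul)
end
section
variable {Ωs : Type*} [MeasurableSpace Ωs] {μ : Measure Ωs} [IsProbabilityMeasure μ]

lemma moment_unif (X : Ωs → ℝ) (hX : Measurable X) (c a : ℝ) (hc : 0 ≤ c)
    (hpdf : Measure.map X μ = ENNReal.ofReal c • volume.restrict (Ico (-a) a))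
    (g : ℝ → ℝ) (hg : Measurable g) (hbd : ∀ x, |g x| ≤ 1) :
    Integrable (fun ω => g (X ω)) μ ∧
      ∫ ω, g (X ω) ∂μ = c * ∫ x in Ico (-a) a, g x := by
  constructor
  · exact (integrable_const (1:ℝ)).mono' (hg.comp hX).aestronglyMeasurable
      (Filter.Eventually.of_forall fun ω => by simpa using hbd (X ω))
  · rw [← integral_map hX.aemeasurable hg.aestronglyMeasurable, hpdf, integral_smul_measure,
      ENNReal.toReal_ofReal hc, smul_eq_mul]

lemma re_im_term (x φ : ℝ) :
    ((x:ℂ) * Complex.exp (Complex.I * (φ:ℂ))).re = x * Real.cos φ ∧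
    ((x:ℂ) * Complex.exp (Complex.I * (φ:ℂ))).im = x * Real.sin φ := by
  rw [mul_comm Complex.I, Complex.exp_mul_I]
  constructor <;> simp [Complex.mul_re, Complex.mul_im, Complex.cos_ofReal_re, Complex.sin_ofReal_re]
end

end Helpers

/-- Rayleigh-fading beamforming-gain identity (Eq. (ez3)): for i.i.d. Rayleigh
amplitudes `α_m` with density `(2x/Ω)·exp(−x²/Ω)` on `x ≥ 0` and i.i.d.
quantization errors `Φ_m` uniform on `[-π/2^b, π/2^b)`, all `2M` variables
mutually independent, `E[|Σ_{m=1}^M α_m·e^{iΦ_m}|²] = M·Ω·(1+(M−1)·(π/4)·Q)`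
where `Q = ((2^b/π)·sin(π/2^b))²`. -/
theorem beamforming_gain_rayleigh
    {Ωs : Type*} [MeasurableSpace Ωs] (μ : Measure Ωs) [IsProbabilityMeasure μ]
    (b M : ℕ) (hb : 0 < b) (hM : 0 < M) (Ω : ℝ) (hΩ : 0 < Ω)
    (α Φ : Fin M → Ωs → ℝ)
    (hαmeas : ∀ m, Measurable (α m)) (hΦmeas : ∀ m, Measurable (Φ m))
    (hαnn : ∀ m ω, 0 ≤ α m ω)
    (hαpdf : ∀ m, Measure.map (α m) μ = volume.withDensity
      (fun x => ENNReal.ofReal (if 0 ≤ x then 2 * x / Ω * Real.exp (-x ^ 2 / Ω) else 0)))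
    (hΦunif : ∀ m, Measure.map (Φ m) μ =
      ENNReal.ofReal ((2 : ℝ) ^ b / (2 * π)) •
        volume.restrict (Set.Ico (-(π / 2 ^ b)) (π / 2 ^ b)))
    -- all 2M random variables are mutually independent
    (hindep : iIndepFun (Sum.elim α Φ) μ) :
    (∫ ω, ‖∑ m, (α m ω : ℂ) * Complex.exp (Complex.I * (Φ m ω : ℂ))‖ ^ 2 ∂μ) =
      (M : ℝ) * Ω *
        (1 + ((M : ℝ) - 1) * (π / 4) * ((2 : ℝ) ^ b / π * Real.sin (π / 2 ^ b)) ^ 2) := by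
  classical
  have h2b : (0:ℝ) < 2 ^ b := by positivity
  have ha : 0 < π / 2 ^ b := div_pos Real.pi_pos h2b
  set A : ℝ := π / 2 ^ b with hA_def
  set C : ℝ := (2:ℝ) ^ b / π * Real.sin A with hC_def
  set c : ℝ := (2:ℝ) ^ b / (2 * π) with hc_def
  have hc : 0 ≤ c := by positivity
  set dens : ℝ → ℝ := fun x => if 0 ≤ x then 2 * x / Ω * Real.exp (-x ^ 2 / Ω) else 0
    with hdens_def
  have hdm : Measurable dens := by
    apply Measurable.ite measurableSet_Ici _ measurable_const
    fun_prop
  have hdnn : ∀ x, 0 ≤ dens x := by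
    intro x
    simp only [dens]
    split
    · have : (0:ℝ) ≤ 2 * x / Ω := by
        apply div_nonneg (by linarith) hΩ.le
      exact mul_nonneg this (Real.exp_nonneg _)
    · exact le_refl 0
  have hb0 : (0:ℝ) < Ω⁻¹ := inv_pos.mpr hΩ
  -- first moment of α
  have hfun1 : (fun x:ℝ => dens x * x)
      = Set.indicator (Set.Ici 0) (fun x => (2/Ω) * (x^2 * Real.exp (-Ω⁻¹ * x^2))) := by
    funext x
    simp only [dens, Set.indicator_apply, Set.mem_Ici]
    split
    · rw [show -x^2/Ω = -Ω⁻¹*x^2 by ring]; ring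
    · rw [zero_mul]
  have intg1 : Integrable (fun x:ℝ => (2/Ω) * (x^2 * Real.exp (-Ω⁻¹ * x^2))) :=
    (int_pow_exp hb0 2).const_mul _
  have hm1 := fun m => moment_pdf (μ := μ) (α m) (hαmeas m) dens hdm hdnn (hαpdf m)
    (fun x => x) measurable_id
    (by rw [hfun1]; exact intg1.indicator measurableSet_Ici)
  have intα : ∀ m, Integrable (α m) μ := fun m => (hm1 m).1
  have Eα : ∀ m, ∫ ω, α m ω ∂μ = Real.sqrt (π*Ω) / 2 := by
    intro m
    rw [(hm1 m).2, hfun1, integral_indicator measurableSet_Ici,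
      integral_Ici_eq_integral_Ioi, integral_const_mul, gauss2 hb0,
      show π / Ω⁻¹ = π * Ω from by field_simp]
    field_simp
    ring
  -- second moment of α
  have hfun2 : (fun x:ℝ => dens x * x^2)
      = Set.indicator (Set.Ici 0) (fun x => (2/Ω) * (x^3 * Real.exp (-Ω⁻¹ * x^2))) := by
    funext x
    simp only [dens, Set.indicator_apply, Set.mem_Ici]
    split
    · rw [show -x^2/Ω = -Ω⁻¹*x^2 by ring]; ring
    · rw [zero_mul]
  have intg2 : Integrable (fun x:ℝ => (2/Ω) * (x^3 * Real.exp (-Ω⁻¹ * x^2))) :=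
    (int_pow_exp hb0 3).const_mul _
  have hm2 := fun m => moment_pdf (μ := μ) (α m) (hαmeas m) dens hdm hdnn (hαpdf m)
    (fun x => x^2) (measurable_id.pow_const 2)
    (by rw [hfun2]; exact intg2.indicator measurableSet_Ici)
  have intα2 : ∀ m, Integrable (fun ω => α m ω ^ 2) μ := fun m => (hm2 m).1
  have Eα2 : ∀ m, ∫ ω, α m ω ^ 2 ∂μ = Ω := by
    intro m
    rw [(hm2 m).2, hfun2, integral_indicator measurableSet_Ici,
      integral_Ici_eq_integral_Ioi, integral_const_mul, gauss3 hb0]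
    field_simp
  -- Φ moments
  have hmc := fun m => moment_unif (μ := μ) (Φ m) (hΦmeas m) c A hc (hΦunif m)
    Real.cos Real.measurable_cos (fun x => Real.abs_cos_le_one x)
  have hms := fun m => moment_unif (μ := μ) (Φ m) (hΦmeas m) c A hc (hΦunif m)
    Real.sin Real.measurable_sin (fun x => Real.abs_sin_le_one x)
  have intcos : ∀ m, Integrable (fun ω => Real.cos (Φ m ω)) μ := fun m => (hmc m).1
  have intsin : ∀ m, Integrable (fun ω => Real.sin (Φ m ω)) μ := fun m => (hms m).1
  have icoscalc : ∫ x in Set.Ico (-A) A, Real.cos x = 2 * Real.sin A := by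
    rw [integral_Ico_eq_integral_Ioo, ← integral_Ioc_eq_integral_Ioo,
      ← intervalIntegral.integral_of_le (by linarith : -A ≤ A), integral_cos, Real.sin_neg]
    ring
  have isincalc : ∫ x in Set.Ico (-A) A, Real.sin x = 0 := by
    rw [integral_Ico_eq_integral_Ioo, ← integral_Ioc_eq_integral_Ioo,
      ← intervalIntegral.integral_of_le (by linarith : -A ≤ A), integral_sin, Real.cos_neg, sub_self]
  have Ecos : ∀ m, ∫ ω, Real.cos (Φ m ω) ∂μ = C := by
    intro m
    rw [(hmc m).2, icoscalc, hc_def, hC_def]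
    field_simp
  have Esin : ∀ m, ∫ ω, Real.sin (Φ m ω) ∂μ = 0 := by
    intro m
    rw [(hms m).2, isincalc, mul_zero]
  -- independence machinery
  have hSmeas : ∀ i : Fin M ⊕ Fin M, Measurable (Sum.elim α Φ i) := by
    rintro (m|m)
    exacts [hαmeas m, hΦmeas m]
  set am : Fin M → Ωs → ℝ := fun m ω => α m ω * Real.cos (Φ m ω) with ham_def
  set bm : Fin M → Ωs → ℝ := fun m ω => α m ω * Real.sin (Φ m ω) with hbm_def
  have indep_αΦ : ∀ m, IndepFun (α m) (Φ m) μ := fun m =>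
    hindep.indepFun (show (Sum.inl m : Fin M ⊕ Fin M) ≠ Sum.inr m by simp)
  have indep1c : ∀ m, IndepFun (α m) (fun ω => Real.cos (Φ m ω)) μ := fun m =>
    (indep_αΦ m).comp measurable_id Real.measurable_cos
  have indep1s : ∀ m, IndepFun (α m) (fun ω => Real.sin (Φ m ω)) μ := fun m =>
    (indep_αΦ m).comp measurable_id Real.measurable_sin
  have int_am : ∀ m, Integrable (am m) μ := fun m =>
    (indep1c m).integrable_mul (intα m) (intcos m)
  have int_bm : ∀ m, Integrable (bm m) μ := fun m =>
    (indep1s m).integrable_mul (intα m) (intsin m)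
  have E_am : ∀ m, ∫ ω, am m ω ∂μ = Real.sqrt (π*Ω) / 2 * C := by
    intro m
    rw [ham_def]
    rw [(indep1c m).integral_fun_mul_eq_mul_integral (intα m).aestronglyMeasurable
      (intcos m).aestronglyMeasurable, Eα m, Ecos m]
  have E_bm : ∀ m, ∫ ω, bm m ω ∂μ = 0 := by
    intro m
    rw [hbm_def]
    rw [(indep1s m).integral_fun_mul_eq_mul_integral (intα m).aestronglyMeasurable
      (intsin m).aestronglyMeasurable, Esin m, mul_zero]
  have hpair : ∀ m n : Fin M, m ≠ n →
      IndepFun (fun ω => (α m ω, Φ m ω)) (fun ω => (α n ω, Φ n ω)) μ := by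
    intro m n hmn
    exact hindep.indepFun_prodMk_prodMk hSmeas (Sum.inl m) (Sum.inr m) (Sum.inl n) (Sum.inr n)
      (by simp [hmn]) (by simp) (by simp) (by simp [hmn])
  have indep_amn : ∀ m n : Fin M, m ≠ n → IndepFun (am m) (am n) μ := fun m n hmn =>
    (hpair m n hmn).comp (measurable_fst.mul (Real.measurable_cos.comp measurable_snd))
      (measurable_fst.mul (Real.measurable_cos.comp measurable_snd))
  have indep_bmn : ∀ m n : Fin M, m ≠ n → IndepFun (bm m) (bm n) μ := fun m n hmn =>
    (hpair m n hmn).comp (measurable_fst.mul (Real.measurable_sin.comp measurable_snd))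
      (measurable_fst.mul (Real.measurable_sin.comp measurable_snd))
  set T : Fin M → Fin M → Ωs → ℝ := fun m n ω => am m ω * am n ω + bm m ω * bm n ω with hT_def
  have Tdiag : ∀ m, T m m = fun ω => α m ω ^ 2 := by
    intro m
    funext ω
    simp only [T, am, bm]
    linear_combination (α m ω)^2 * Real.sin_sq_add_cos_sq (Φ m ω)
  have intT : ∀ m n, Integrable (T m n) μ := by
    intro m n
    by_cases h : m = n
    · subst h
      rw [Tdiag m]
      exact intα2 m
    · exact ((indep_amn m n h).integrable_mul (int_am m) (int_am n)).add
        ((indep_bmn m n h).integrable_mul (int_bm m) (int_bm n))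
  set K : ℝ := π * Ω / 4 * C ^ 2 with hK_def
  have ET : ∀ m n, ∫ ω, T m n ω ∂μ = if m = n then Ω else K := by
    intro m n
    by_cases h : m = n
    · subst h
      rw [if_pos rfl, hT_def]
      calc ∫ ω, T m m ω ∂μ = ∫ ω, α m ω ^ 2 ∂μ := by rw [Tdiag m]
        _ = Ω := Eα2 m
    · rw [if_neg h, hT_def]
      have h1 : ∫ ω, am m ω * am n ω ∂μ = (Real.sqrt (π*Ω) / 2 * C) * (Real.sqrt (π*Ω) / 2 * C) := by
        rw [(indep_amn m n h).integral_fun_mul_eq_mul_integral (int_am m).aestronglyMeasurable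
          (int_am n).aestronglyMeasurable, E_am m, E_am n]
      have h2 : ∫ ω, bm m ω * bm n ω ∂μ = 0 := by
        rw [(indep_bmn m n h).integral_fun_mul_eq_mul_integral (int_bm m).aestronglyMeasurable
          (int_bm n).aestronglyMeasurable, E_bm m, zero_mul]
      have i1 : Integrable (fun ω => am m ω * am n ω) μ :=
        (indep_amn m n h).integrable_mul (int_am m) (int_am n)
      have i2 : Integrable (fun ω => bm m ω * bm n ω) μ :=
        (indep_bmn m n h).integrable_mul (int_bm m) (int_bm n)
      rw [integral_add i1 i2, h1, h2, add_zero, hK_def]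
      have hs : Real.sqrt (π*Ω) ^ 2 = π * Ω := Real.sq_sqrt (by positivity)
      linear_combination (C^2/4) * hs
  -- pointwise expansion
  have key : ∀ ω, (‖∑ m, (α m ω : ℂ) * Complex.exp (Complex.I * (Φ m ω : ℂ))‖) ^ 2
      = ∑ m, ∑ n, T m n ω := by
    intro ω
    rw [Complex.sq_norm, Complex.normSq_apply, Complex.re_sum, Complex.im_sum]
    rw [Finset.sum_congr rfl (fun m _ => (re_im_term (α m ω) (Φ m ω)).1),
      Finset.sum_congr rfl (fun m _ => (re_im_term (α m ω) (Φ m ω)).2)]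
    rw [Finset.sum_mul_sum, Finset.sum_mul_sum, ← Finset.sum_add_distrib]
    exact Finset.sum_congr rfl fun m _ => (Finset.sum_add_distrib).symm
  -- assemble
  rw [integral_congr_ae (Filter.Eventually.of_forall key)]
  rw [integral_finset_sum _ (fun m _ => integrable_finset_sum _ (fun n _ => intT m n))]
  have step : ∀ m : Fin M, ∫ ω, ∑ n, T m n ω ∂μ = ∑ n, if m = n then Ω else K := by
    intro m
    rw [integral_finset_sum _ (fun n _ => intT m n)]
    exact Finset.sum_congr rfl fun n _ => ET m n
  rw [Finset.sum_congr rfl (fun m _ => step m)]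
  have inner : ∀ m : Fin M, (∑ n : Fin M, if m = n then Ω else K) = Ω + ((M:ℝ)-1)*K := by
    intro m
    have hsplit : ∀ n : Fin M, (if m = n then Ω else K) = K + (if m = n then Ω - K else 0) := by
      intro n; split <;> ring
    simp_rw [hsplit]
    rw [Finset.sum_add_distrib, Finset.sum_const, Finset.card_univ, Fintype.card_fin,
      Finset.sum_ite_eq, if_pos (Finset.mem_univ m), nsmul_eq_mul]
    ring
  rw [Finset.sum_congr rfl (fun m _ => inner m), Finset.sum_const, Finset.card_univ,
    Fintype.card_fin, nsmul_eq_mul, hK_def]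
  ring
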